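/- Let φ : [0,1] → ℝ be twice continuously differentiable with φ(0) = φ(1) = 0. Then φ'(0)² ≤ 2·∫₀¹ φ''(x)² dx + ∫₀¹ φ(x)² dx. -/

import Mathlib

open Real Set intervalIntegral

/-- If φ : [0,1] → ℝ is C² with φ(0) = φ(1) = 0, then
φ'(0)² ≤ 2∫₀¹ φ''(x)² dx + ∫₀¹ φ(x)² dx. -/
theorem stmt17 (φ : ℝ → ℝ)
    (hφ : ContDiffOn ℝ 2 φ (Icc 0 1))
    (h0 : φ 0 = 0) (h1 : φ 1 = 0) :
    (derivWithin φ (Icc 0 1) 0) ^ 2 ≤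
      2 * (∫ x in (0 : ℝ)..1, (iteratedDerivWithin 2 φ (Icc 0 1) x) ^ 2)
        + ∫ x in (0 : ℝ)..1, (φ x) ^ 2 := by
  have hs : UniqueDiffOn ℝ (Icc (0:ℝ) 1) := uniqueDiffOn_Icc one_pos
  set s : Set ℝ := Icc (0:ℝ) 1 with hs_def
  set f : ℝ → ℝ := derivWithin φ s with hf_def
  set g : ℝ → ℝ := iteratedDerivWithin 2 φ s with hg_def
  have hφc : ContinuousOn φ s := hφ.continuousOn
  have hφd : DifferentiableOn ℝ φ s := hφ.differentiableOn (by norm_num)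
  have hf1 : ContDiffOn ℝ 1 f s := hφ.derivWithin hs (by norm_num)
  have hfc : ContinuousOn f s := hf1.continuousOn
  have hfd : DifferentiableOn ℝ f s := hf1.differentiableOn one_ne_zero
  have hgc : ContinuousOn g s := hφ.continuousOn_iteratedDerivWithin (by norm_num) hs
  have hg_eq : ∀ x ∈ s, g x = derivWithin f s x := by
    intro x hx
    rw [hg_def, show (2 : ℕ) = 1 + 1 from rfl, iteratedDerivWithin_succ]
    exact derivWithin_congr (fun y hy => congrFun iteratedDerivWithin_one y)
      (congrFun iteratedDerivWithin_one x)
  -- derivatives at interior points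
  have hfD : ∀ x ∈ Ioo (0:ℝ) 1, HasDerivAt φ (f x) x := by
    intro x hx
    exact ((hφd x (Ioo_subset_Icc_self hx)).hasDerivWithinAt).hasDerivAt
      (Icc_mem_nhds hx.1 hx.2)
  have hgD : ∀ x ∈ Ioo (0:ℝ) 1, HasDerivAt f (g x) x := by
    intro x hx
    rw [hg_eq x (Ioo_subset_Icc_self hx)]
    exact ((hfd x (Ioo_subset_Icc_self hx)).hasDerivWithinAt).hasDerivAt
      (Icc_mem_nhds hx.1 hx.2)
  -- interval integrability helper
  have hII : ∀ h : ℝ → ℝ, ContinuousOn h s → IntervalIntegrable h MeasureTheory.volume 0 1 := by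
    intro h hh
    apply ContinuousOn.intervalIntegrable
    rwa [uIcc_of_le zero_le_one]
  have hIf2 : IntervalIntegrable (fun x => f x ^ 2) MeasureTheory.volume 0 1 :=
    hII _ (hfc.pow 2)
  have hIg2 : IntervalIntegrable (fun x => g x ^ 2) MeasureTheory.volume 0 1 :=
    hII _ (hgc.pow 2)
  have hIφ2 : IntervalIntegrable (fun x => φ x ^ 2) MeasureTheory.volume 0 1 :=
    hII _ (hφc.pow 2)
  have hID : IntervalIntegrable (fun x => (x - 1) * (2 * f x * g x)) MeasureTheory.volume 0 1 :=
    hII _ (((continuousOn_id.sub continuousOn_const)).mul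
      (((continuousOn_const.mul hfc)).mul hgc))
  have hIφg : IntervalIntegrable (fun x => φ x * g x) MeasureTheory.volume 0 1 :=
    hII _ (hφc.mul hgc)
  -- FTC 1 : ∫ (f² + (x-1)*2fg) = f 0 ^ 2
  have ftc1 : (∫ x in (0:ℝ)..1, (f x ^ 2 + (x - 1) * (2 * f x * g x)))
      = f 0 ^ 2 := by
    have := intervalIntegral.integral_eq_sub_of_hasDeriv_right_of_le
      (f := fun x => (x - 1) * f x ^ 2)
      (f' := fun x => f x ^ 2 + (x - 1) * (2 * f x * g x))
      zero_le_one
      ((continuousOn_id.sub continuousOn_const).mul (hfc.pow 2))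
      (fun x hx => by
        have h1 : HasDerivAt (fun x : ℝ => x - 1) 1 x := (hasDerivAt_id x).sub_const 1
        have h2 : HasDerivAt (fun x => f x ^ 2) (2 * f x * g x) x := by
          have := (hgD x hx).fun_pow 2
          simpa [mul_comm, mul_assoc, mul_left_comm] using this
        have := h1.mul h2
        refine (this.congr_deriv (by ring)).hasDerivWithinAt)
      (hIf2.add hID)
    rw [this]
    ring
  -- FTC 2 : ∫ (f² + φ*g) = 0
  have ftc2 : (∫ x in (0:ℝ)..1, (f x ^ 2 + φ x * g x)) = 0 := by
    have := intervalIntegral.integral_eq_sub_of_hasDeriv_right_of_le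
      (f := fun x => φ x * f x)
      (f' := fun x => f x ^ 2 + φ x * g x)
      zero_le_one
      (hφc.mul hfc)
      (fun x hx => by
        have := (hfD x hx).mul (hgD x hx)
        refine (this.congr_deriv (by ring)).hasDerivWithinAt)
      (hIf2.add hIφg)
    rw [this, h0, h1]
    ring
  -- split the integrals
  have split1 : (∫ x in (0:ℝ)..1, f x ^ 2)
      + (∫ x in (0:ℝ)..1, (x - 1) * (2 * f x * g x)) = f 0 ^ 2 := by
    rw [← intervalIntegral.integral_add hIf2 hID]; exact ftc1
  have split2 : (∫ x in (0:ℝ)..1, f x ^ 2)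
      + (∫ x in (0:ℝ)..1, φ x * g x) = 0 := by
    rw [← intervalIntegral.integral_add hIf2 hIφg]; exact ftc2
  -- pointwise bounds
  have mono1 : (∫ x in (0:ℝ)..1, (x - 1) * (2 * f x * g x))
      ≤ ∫ x in (0:ℝ)..1, (f x ^ 2 + g x ^ 2) := by
    apply intervalIntegral.integral_mono_on zero_le_one hID (hIf2.add hIg2)
    intro x hx
    have h1 : (0:ℝ) ≤ x := hx.1
    have h2 : x ≤ 1 := hx.2
    nlinarith [sq_nonneg (f x + g x), sq_nonneg (f x - g x),
      mul_nonneg (sub_nonneg.2 h2) (sq_nonneg (f x + g x)),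
      mul_nonneg h1 (sq_nonneg (f x - g x))]
  have mono2 : (∫ x in (0:ℝ)..1, (-(φ x * g x)))
      ≤ ∫ x in (0:ℝ)..1, (φ x ^ 2 / 2 + g x ^ 2 / 2) := by
    apply intervalIntegral.integral_mono_on zero_le_one hIφg.neg
      ((hIφ2.div_const 2).add (hIg2.div_const 2))
    intro x _
    simp only [Pi.neg_apply]
    nlinarith [sq_nonneg (φ x + g x)]
  have e1 : (∫ x in (0:ℝ)..1, (f x ^ 2 + g x ^ 2))
      = (∫ x in (0:ℝ)..1, f x ^ 2) + (∫ x in (0:ℝ)..1, g x ^ 2) :=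
    intervalIntegral.integral_add hIf2 hIg2
  have e2 : (∫ x in (0:ℝ)..1, (φ x ^ 2 / 2 + g x ^ 2 / 2))
      = (∫ x in (0:ℝ)..1, φ x ^ 2) / 2 + (∫ x in (0:ℝ)..1, g x ^ 2) / 2 := by
    rw [intervalIntegral.integral_add (hIφ2.div_const 2) (hIg2.div_const 2),
      intervalIntegral.integral_div, intervalIntegral.integral_div]
  have e3 : (∫ x in (0:ℝ)..1, (-(φ x * g x))) = -(∫ x in (0:ℝ)..1, φ x * g x) :=
    intervalIntegral.integral_neg
  rw [e1] at mono1
  rw [e2, e3] at mono2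
  linarith
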